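/- For the one-hidden-layer network, the dropout Rademacher complexity of dropout of units is at most that of dropout of weights: 𝔑_n(F_W^{(I)}) ≤ 𝔑_n(F_W^{(II)}), where f^{(I)}(w,x,r) = ⟨w^{[1]}, r^{[1]} ⊙ Ψ(w^{[0]}_1,…,w^{[0]}_m, x⊙r^{[0]})⟩ and f^{(II)}(w,x,r) = ⟨w^{[1]}⊙r^{[1]}, Ψ(w^{[0]}_1⊙r^{[0]}_1,…,w^{[0]}_m⊙r^{[0]}_m, x)⟩, with Ψ(v_1,…,v_m,x) = (σ(⟨v_1,x⟩),…,σ(⟨v_m,x⟩)) and all dropout coordinates i.i.d. Bern(ρ). -/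

import Mathlib

open MeasureTheory Finset

noncomputable section

/-- `0/1` dropout mask as a real number. -/
def mask (b : Bool) : ℝ := if b then 1 else 0

/-- Rademacher sign `±1`. -/
def sgn (b : Bool) : ℝ := if b then 1 else -1

/-- Probability of a single `Bern(ρ)` coordinate. -/
def bw (ρ : ℝ) (b : Bool) : ℝ := if b then ρ else 1 - ρ

/-- Empirical dropout Rademacher complexity of a class of functions on
`X × R` indexed by weights `w ∈ WS`, on sample `xs` and dropout variables `rs`.
The expectation over the i.i.d. uniform signs is the average over all `2ⁿ`
sign patterns. -/
def empRadW {Wt X R : Type*} (n : ℕ) (WS : Set Wt)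
    (F : Wt → X → R → ℝ) (xs : Fin n → X) (rs : Fin n → R) : ℝ :=
  (∑ ε : Fin n → Bool,
      sSup {v : ℝ | ∃ w ∈ WS,
        v = (1 / (n : ℝ)) * ∑ i, sgn (ε i) * F w (xs i) (rs i)}) / 2 ^ n

/-- The (expected) dropout Rademacher complexity `𝔑ₙ`: the expectation, over the
i.i.d. sample `xs ~ DXⁿ` and the i.i.d. dropout variables `rs` (each distributed
according to the finite Bernoulli-product law with weights `wt`), of the empirical
dropout Rademacher complexity. -/
def radC {Wt R : Type*} [Fintype R] (n d : ℕ) (DX : Measure (Fin d → ℝ))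
    (WS : Set Wt) (wt : R → ℝ) (F : Wt → (Fin d → ℝ) → R → ℝ) : ℝ :=
  ∫ xs : Fin n → Fin d → ℝ,
      ∑ rs : Fin n → R, (∏ i, wt (rs i)) * empRadW n WS F xs rs
    ∂(Measure.pi fun _ => DX)

/-- Weight class of the one-hidden-layer network with `m` hidden units:
`w = (w⁽¹⁾, w⁽⁰⁾₁,…,w⁽⁰⁾_m)` with `‖w⁽¹⁾‖₁ ≤ B₁` and `‖w⁽⁰⁾ᵢ‖₂ ≤ B₀`. -/
def oneW (m d : ℕ) (B₁ B₀ : ℝ) : Set ((Fin m → ℝ) × (Fin m → Fin d → ℝ)) :=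
  {w | (∑ i, |w.1 i|) ≤ B₁ ∧ ∀ i, Real.sqrt (∑ j, w.2 i j ^ 2) ≤ B₀}

/-- Type (I) dropout (dropout of units) output of the one-hidden-layer network:
`f⁽ᴵ⁾(w,x,r) = ⟨w⁽¹⁾, r⁽¹⁾ ⊙ Ψ(w⁽⁰⁾₁,…,w⁽⁰⁾_m, x⊙r⁽⁰⁾)⟩` with
`Ψ(v₁,…,v_m,x) = (σ⟨v₁,x⟩,…,σ⟨v_m,x⟩)`. -/
def oneFI (m d : ℕ) (σ : ℝ → ℝ) :
    (Fin m → ℝ) × (Fin m → Fin d → ℝ) → (Fin d → ℝ) →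
      (Fin m → Bool) × (Fin d → Bool) → ℝ :=
  fun w x r => ∑ i, w.1 i * (mask (r.1 i) * σ (∑ j, w.2 i j * (x j * mask (r.2 j))))

/-- Type (II) dropout (dropout of weights) output of the one-hidden-layer network:
`f⁽ᴵᴵ⁾(w,x,r) = ⟨w⁽¹⁾⊙r⁽¹⁾, Ψ(w⁽⁰⁾₁⊙r⁽⁰⁾₁,…,w⁽⁰⁾_m⊙r⁽⁰⁾_m, x)⟩`. -/
def oneFII (m d : ℕ) (σ : ℝ → ℝ) :
    (Fin m → ℝ) × (Fin m → Fin d → ℝ) → (Fin d → ℝ) →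
      (Fin m → Bool) × (Fin m → Fin d → Bool) → ℝ :=
  fun w x r => ∑ i, (w.1 i * mask (r.1 i)) * σ (∑ j, (w.2 i j * mask (r.2 i j)) * x j)

/-- Type (III) dropout (dropout of both units and weights) output of the
one-hidden-layer network:
`f⁽ᴵᴵᴵ⁾(w,x,r) = ⟨w⁽¹⁾⊙r⁽¹⁾₁, r⁽¹⁾₂ ⊙ Ψ(w⁽⁰⁾₁⊙r⁽⁰⁾₁,…,w⁽⁰⁾_m⊙r⁽⁰⁾_m, x⊙r⁽⁰⁾_{m+1})⟩`. -/
def oneFIII (m d : ℕ) (σ : ℝ → ℝ) :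
    (Fin m → ℝ) × (Fin m → Fin d → ℝ) → (Fin d → ℝ) →
      (Fin m → Bool) × (Fin m → Bool) × (Fin m → Fin d → Bool) × (Fin d → Bool) → ℝ :=
  fun w x r => ∑ i, (w.1 i * mask (r.1 i)) *
    (mask (r.2.1 i) * σ (∑ j, (w.2 i j * mask (r.2.2.1 i j)) * (x j * mask (r.2.2.2 j))))

/-- Bernoulli product weight of a Type (I) dropout configuration. -/
def wtOneI (m d : ℕ) (ρ : ℝ) (r : (Fin m → Bool) × (Fin d → Bool)) : ℝ :=
  (∏ i, bw ρ (r.1 i)) * ∏ j, bw ρ (r.2 j)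

/-- Bernoulli product weight of a Type (II) dropout configuration. -/
def wtOneII (m d : ℕ) (ρ : ℝ) (r : (Fin m → Bool) × (Fin m → Fin d → Bool)) : ℝ :=
  (∏ i, bw ρ (r.1 i)) * ∏ i, ∏ j, bw ρ (r.2 i j)

/-- Bernoulli product weight of a Type (III) dropout configuration. -/
def wtOneIII (m d : ℕ) (ρ : ℝ)
    (r : (Fin m → Bool) × (Fin m → Bool) × (Fin m → Fin d → Bool) × (Fin d → Bool)) : ℝ :=
  (∏ i, bw ρ (r.1 i)) * (∏ i, bw ρ (r.2.1 i)) *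
    (∏ i, ∏ j, bw ρ (r.2.2.1 i j)) * ∏ j, bw ρ (r.2.2.2 j)

end


section LayerCake
open Classical in
private lemma indicator_integrable {lo hi c : ℝ} :
    Integrable (fun t => if t < c then (1:ℝ) else 0) (volume.restrict (Set.Ioo lo hi)) := by
  haveI : IsFiniteMeasure (volume.restrict (Set.Ioo lo hi)) := by
    constructor
    rw [Measure.restrict_apply_univ, Real.volume_Ioo]
    exact ENNReal.ofReal_lt_top
  have : (fun t => if t < c then (1:ℝ) else 0)
      = (Set.Iio c).indicator (fun _ => (1:ℝ)) := by
    ext t; simp [Set.indicator_apply]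
  rw [this]
  exact (integrable_const (1:ℝ)).indicator measurableSet_Iio

open Classical in
private lemma indicator_integral {lo hi c : ℝ} (h1 : lo ≤ c) (h2 : c ≤ hi) :
    ∫ t in Set.Ioo lo hi, (if t < c then (1:ℝ) else 0) ∂volume = c - lo := by
  have : (fun t => if t < c then (1:ℝ) else 0)
      = (Set.Iio c).indicator (fun _ => (1:ℝ)) := by
    ext t; simp [Set.indicator_apply]
  rw [this, MeasureTheory.setIntegral_indicator measurableSet_Iio]
  have hs : Set.Ioo lo hi ∩ Set.Iio c = Set.Ioo lo c := by
    ext t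
    simp only [Set.mem_inter_iff, Set.mem_Ioo, Set.mem_Iio]
    constructor
    · rintro ⟨⟨h3, _⟩, h4⟩; exact ⟨h3, h4⟩
    · rintro ⟨h3, h4⟩; exact ⟨⟨h3, lt_of_lt_of_le h4 h2⟩, h4⟩
  rw [hs]
  simp [Real.volume_Ioo, ENNReal.toReal_ofReal (by linarith : (0:ℝ) ≤ c - lo), h1]

open Classical in
private lemma tail_expectation {Ω : Type*} [Fintype Ω] (P : Ω → ℝ) (X : Ω → ℝ)
    (hP1 : ∑ ω, P ω = 1) (lo hi : ℝ) (hlo : ∀ ω, lo ≤ X ω) (hhi : ∀ ω, X ω ≤ hi) :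
    ∑ ω, P ω * X ω
      = lo + ∫ t in Set.Ioo lo hi, (∑ ω, P ω * (if t < X ω then (1:ℝ) else 0)) ∂volume := by
  rw [MeasureTheory.integral_finset_sum _
    (fun ω _ => (indicator_integrable (c := X ω)).const_mul (P ω))]
  have : ∀ ω, ∫ t in Set.Ioo lo hi, P ω * (if t < X ω then (1:ℝ) else 0) ∂volume
      = P ω * (X ω - lo) := by
    intro ω
    rw [MeasureTheory.integral_const_mul, indicator_integral (hlo ω) (hhi ω)]
  simp_rw [this]
  have : ∑ ω, P ω * (X ω - lo) = ∑ ω, P ω * X ω - (∑ ω, P ω) * lo := by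
    rw [Finset.sum_mul, ← Finset.sum_sub_distrib]
    congr 1; ext ω; ring
  rw [this, hP1]; ring

open Classical in
lemma dom_exp {Ω Ω' : Type*} [Fintype Ω] [Fintype Ω'] [Nonempty Ω] [Nonempty Ω']
    (P : Ω → ℝ) (Q : Ω' → ℝ)
    (hP1 : ∑ ω, P ω = 1) (hQ1 : ∑ ω, Q ω = 1) (X : Ω → ℝ) (Y : Ω' → ℝ)
    (h : ∀ t : ℝ, ∑ ω, P ω * (if t < X ω then (1:ℝ) else 0)
        ≤ ∑ ω, Q ω * (if t < Y ω then (1:ℝ) else 0)) :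
    ∑ ω, P ω * X ω ≤ ∑ ω, Q ω * Y ω := by
  set lo : ℝ := min (univ.inf' univ_nonempty X) (univ.inf' univ_nonempty Y) with hlo_def
  set hi : ℝ := max (univ.sup' univ_nonempty X) (univ.sup' univ_nonempty Y) with hhi_def
  have hloX : ∀ ω, lo ≤ X ω := fun ω =>
    le_trans (min_le_left _ _) (Finset.inf'_le _ (mem_univ ω))
  have hloY : ∀ ω, lo ≤ Y ω := fun ω =>
    le_trans (min_le_right _ _) (Finset.inf'_le _ (mem_univ ω))
  have hhiX : ∀ ω, X ω ≤ hi := fun ω =>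
    le_trans (Finset.le_sup' _ (mem_univ ω)) (le_max_left _ _)
  have hhiY : ∀ ω, Y ω ≤ hi := fun ω =>
    le_trans (Finset.le_sup' _ (mem_univ ω)) (le_max_right _ _)
  rw [tail_expectation P X hP1 lo hi hloX hhiX, tail_expectation Q Y hQ1 lo hi hloY hhiY]
  apply add_le_add_right
  apply MeasureTheory.integral_mono
  · exact integrable_finset_sum _ (fun ω _ => (indicator_integrable (c := X ω)).const_mul (P ω))
  · exact integrable_finset_sum _ (fun ω _ => (indicator_integrable (c := Y ω)).const_mul (Q ω))
  · intro t; exact h t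
end LayerCake

private lemma sum_prod_split {γ₁ γ₂ : Type*} [Fintype γ₁] [Fintype γ₂] (f : γ₁ → γ₂ → ℝ) :
    ∑ ω : γ₁ × γ₂, f ω.1 ω.2 = ∑ x : γ₁, ∑ y : γ₂, f x y := by
  rw [Fintype.sum_prod_type]

open Classical in
lemma sum_pi_prod {A : Type*} [Fintype A] {m : ℕ} (p : A → ℝ) :
    ∑ g : Fin m → A, ∏ k, p (g k) = (∑ a, p a) ^ m := by
  have h := Finset.prod_univ_sum (fun _ : Fin m => (univ : Finset A)) (fun _ a => p a)
  rw [Fintype.piFinset_univ] at h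
  rw [← h, Finset.prod_const, Finset.card_univ, Fintype.card_fin]

set_option maxHeartbeats 1600000 in
open Classical in
lemma core {A C : Type*} [Fintype A] [Fintype C] [Nonempty A] [Nonempty C] {m : ℕ}
    (hm : (univ : Finset (Fin m)).Nonempty)
    (p : A → ℝ) (q : C → ℝ) (hp : ∀ a, 0 ≤ p a) (hq : ∀ c, 0 ≤ q c)
    (hp1 : ∑ a, p a = 1) (hq1 : ∑ c, q c = 1) (H : A → C → ℝ) :
    ∑ aa : Fin m → A, ∑ c : C,
        ((∏ k, p (aa k)) * q c) * (univ.sup' hm fun k => H (aa k) c)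
      ≤ ∑ aa : Fin m → A, ∑ b : Fin m → C,
        ((∏ k, p (aa k)) * ∏ k, q (b k)) * (univ.sup' hm fun k => H (aa k) (b k)) := by
  have e1 : (∑ ω : (Fin m → A) × C, ((∏ k, p (ω.1 k)) * q ω.2) *
        (univ.sup' hm fun k => H (ω.1 k) ω.2))
      = ∑ aa : Fin m → A, ∑ c : C,
        ((∏ k, p (aa k)) * q c) * (univ.sup' hm fun k => H (aa k) c) :=
    sum_prod_split (fun (aa : Fin m → A) (c : C) => ((∏ k, p (aa k)) * q c) * (univ.sup' hm fun k => H (aa k) c))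
  have e2 : (∑ ω : (Fin m → A) × (Fin m → C), ((∏ k, p (ω.1 k)) * ∏ k, q (ω.2 k)) *
        (univ.sup' hm fun k => H (ω.1 k) (ω.2 k)))
      = ∑ aa : Fin m → A, ∑ b : Fin m → C,
        ((∏ k, p (aa k)) * ∏ k, q (b k)) * (univ.sup' hm fun k => H (aa k) (b k)) :=
    sum_prod_split (fun (aa : Fin m → A) (b : Fin m → C) => ((∏ k, p (aa k)) * ∏ k, q (b k)) *
      (univ.sup' hm fun k => H (aa k) (b k)))
  rw [← e1, ← e2]
  apply dom_exp
  · rw [sum_prod_split (fun (aa : Fin m → A) (c : C) => (∏ k, p (aa k)) * q c),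
      ← Finset.sum_mul_sum, sum_pi_prod p, hp1, hq1, one_pow, one_mul]
  · rw [sum_prod_split (fun (aa : Fin m → A) (b : Fin m → C) => (∏ k, p (aa k)) * ∏ k, q (b k)),
      ← Finset.sum_mul_sum, sum_pi_prod p, sum_pi_prod q, hp1, hq1, one_pow, one_mul]
  · -- tail comparison
    intro t
    set χ : A → C → ℝ := fun a c => if t < H a c then 0 else 1 with hχ
    have hχ01 : ∀ a c, 0 ≤ χ a c := by intro a c; simp only [hχ]; split <;> norm_num
    have hind : ∀ (aa : Fin m → A) (bb : Fin m → C),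
        (if t < univ.sup' hm (fun k => H (aa k) (bb k)) then (1:ℝ) else 0)
          = 1 - ∏ k, χ (aa k) (bb k) := by
      intro aa bb
      by_cases hcase : t < univ.sup' hm fun k => H (aa k) (bb k)
      · rw [if_pos hcase]
        obtain ⟨k₀, _, hk₀⟩ := (Finset.lt_sup'_iff hm).mp hcase
        rw [Finset.prod_eq_zero (mem_univ k₀) (by simp [hχ, if_pos hk₀])]; ring
      · rw [if_neg hcase]
        have hno : ∀ k, ¬ t < H (aa k) (bb k) := by
          intro k hk
          exact hcase ((Finset.lt_sup'_iff hm).mpr ⟨k, mem_univ k, hk⟩)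
        rw [Finset.prod_eq_one (fun k _ => by simp [hχ, if_neg (hno k)])]; ring
    set F : C → ℝ := fun c => ∑ a, p a * χ a c with hF
    have hF0 : ∀ c, 0 ≤ F c := fun c =>
      Finset.sum_nonneg fun a _ => mul_nonneg (hp a) (hχ01 a c)
    have hFq : ∑ c, q c * F c = ∑ a, ∑ c, p a * q c * χ a c := by
      rw [Finset.sum_comm]
      refine Finset.sum_congr rfl fun c _ => ?_
      rw [hF, Finset.mul_sum]
      refine Finset.sum_congr rfl fun a _ => by ring
    have hL : ∑ ω : (Fin m → A) × C,
        ((∏ k, p (ω.1 k)) * q ω.2) * (if t < univ.sup' hm fun k => H (ω.1 k) ω.2 then (1:ℝ) else 0)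
        = 1 - ∑ c, q c * (F c) ^ m := by
      calc ∑ ω : (Fin m → A) × C, ((∏ k, p (ω.1 k)) * q ω.2) *
              (if t < univ.sup' hm fun k => H (ω.1 k) ω.2 then (1:ℝ) else 0)
          = ∑ ω : (Fin m → A) × C, (((∏ k, p (ω.1 k)) * q ω.2)
              - q ω.2 * ∏ k, (p (ω.1 k) * χ (ω.1 k) ω.2)) := by
            refine Finset.sum_congr rfl fun ω _ => ?_
            rw [hind ω.1 (fun _ => ω.2), Finset.prod_mul_distrib]; ring
        _ = 1 - ∑ c, q c * (F c) ^ m := by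
            rw [Finset.sum_sub_distrib]
            congr 1
            · rw [sum_prod_split (fun (aa : Fin m → A) (c : C) => (∏ k, p (aa k)) * q c),
                ← Finset.sum_mul_sum, sum_pi_prod p, hp1, hq1, one_pow, one_mul]
            · rw [sum_prod_split (fun (aa : Fin m → A) (c : C) =>
                  q c * ∏ k, (p (aa k) * χ (aa k) c)), Finset.sum_comm]
              refine Finset.sum_congr rfl fun c _ => ?_
              rw [← Finset.mul_sum, sum_pi_prod (fun a => p a * χ a c)]
    have hR : ∑ ω : (Fin m → A) × (Fin m → C),
        ((∏ k, p (ω.1 k)) * ∏ k, q (ω.2 k)) *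
          (if t < univ.sup' hm fun k => H (ω.1 k) (ω.2 k) then (1:ℝ) else 0)
        = 1 - (∑ c, q c * F c) ^ m := by
      calc ∑ ω : (Fin m → A) × (Fin m → C), ((∏ k, p (ω.1 k)) * ∏ k, q (ω.2 k)) *
              (if t < univ.sup' hm fun k => H (ω.1 k) (ω.2 k) then (1:ℝ) else 0)
          = ∑ ω : (Fin m → A) × (Fin m → C), (((∏ k, p (ω.1 k)) * ∏ k, q (ω.2 k))
              - ∏ k, (p (ω.1 k) * q (ω.2 k) * χ (ω.1 k) (ω.2 k))) := by
            refine Finset.sum_congr rfl fun ω _ => ?_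
            rw [hind ω.1 ω.2,
              show ∏ k, (p (ω.1 k) * q (ω.2 k) * χ (ω.1 k) (ω.2 k))
                = ((∏ k, p (ω.1 k)) * ∏ k, q (ω.2 k)) * ∏ k, χ (ω.1 k) (ω.2 k) by
                rw [← Finset.prod_mul_distrib, ← Finset.prod_mul_distrib]]
            ring
        _ = 1 - (∑ c, q c * F c) ^ m := by
            rw [Finset.sum_sub_distrib]
            congr 1
            · rw [sum_prod_split (fun (aa : Fin m → A) (b : Fin m → C) =>
                  (∏ k, p (aa k)) * ∏ k, q (b k)),
                ← Finset.sum_mul_sum, sum_pi_prod p, sum_pi_prod q, hp1, hq1, one_pow, one_mul]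
            · rw [← Fintype.sum_equiv (Equiv.arrowProdEquivProdArrow (Fin m) (fun _ => A) (fun _ => C))
                (fun g : Fin m → A × C => ∏ k, (p ((g k).1) * q ((g k).2) * χ ((g k).1) ((g k).2)))
                (fun ω : (Fin m → A) × (Fin m → C) =>
                  ∏ k, (p (ω.1 k) * q (ω.2 k) * χ (ω.1 k) (ω.2 k)))
                (fun g => rfl),
                sum_pi_prod (fun ac : A × C => p ac.1 * q ac.2 * χ ac.1 ac.2)]
              congr 1
              rw [hFq, ← sum_prod_split (fun (a : A) (c : C) => p a * q c * χ a c)]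
    rw [hL, hR]
    have jensen : (∑ c, q c * F c) ^ m ≤ ∑ c, q c * (F c) ^ m := by
      have hconv := convexOn_pow (𝕜 := ℝ) m
      have := hconv.map_sum_le (t := univ) (w := q) (p := F)
        (fun c _ => hq c) hq1 (fun c _ => Set.mem_Ici.mpr (hF0 c))
      simpa [smul_eq_mul] using this
    linarith
section Net

variable {m d n : ℕ}

/-- Per-unit correlation term. -/
noncomputable def Tval (xs : Fin n → Fin d → ℝ) (σ : ℝ → ℝ)
    (ε α : Fin n → Bool) (β : Fin n → Fin d → Bool) (v : Fin d → ℝ) : ℝ :=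
  ∑ i, sgn (ε i) * (mask (α i) * σ (∑ j, (v j * mask (β i j)) * xs i j))

/-- Set of achievable per-unit values. -/
def Gset (B₀ : ℝ) (xs : Fin n → Fin d → ℝ) (σ : ℝ → ℝ)
    (ε α : Fin n → Bool) (β : Fin n → Fin d → Bool) : Set ℝ :=
  {u | ∃ v : Fin d → ℝ, Real.sqrt (∑ j, v j ^ 2) ≤ B₀ ∧
    (u = Tval xs σ ε α β v ∨ u = -Tval xs σ ε α β v)}

noncomputable def Gv (B₀ : ℝ) (xs : Fin n → Fin d → ℝ) (σ : ℝ → ℝ)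
    (ε α : Fin n → Bool) (β : Fin n → Fin d → Bool) : ℝ :=
  sSup (Gset B₀ xs σ ε α β)

noncomputable def CC (B₀ L : ℝ) (xs : Fin n → Fin d → ℝ) : ℝ :=
  ∑ i, L * (B₀ * Real.sqrt (∑ j, xs i j ^ 2))

lemma mask_sq_le (b : Bool) : mask b ^ 2 ≤ 1 := by
  unfold mask; split <;> norm_num

lemma Tval_zero {xs : Fin n → Fin d → ℝ} {σ : ℝ → ℝ} (hσ0 : σ 0 = 0)
    {ε α : Fin n → Bool} {β : Fin n → Fin d → Bool} : Tval xs σ ε α β 0 = 0 := by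
  unfold Tval
  have h : ∀ i : Fin n, (∑ j, ((0 : Fin d → ℝ) j * mask (β i j)) * xs i j) = 0 := by
    intro i; simp
  refine Finset.sum_eq_zero fun i _ => ?_
  rw [h i, hσ0, mul_zero, mul_zero]

lemma cs_bound {B₀ : ℝ} (hB₀ : 0 ≤ B₀) {v : Fin d → ℝ}
    (hv : Real.sqrt (∑ j, v j ^ 2) ≤ B₀) (β : Fin d → Bool) (x : Fin d → ℝ) :
    |∑ j, (v j * mask (β j)) * x j| ≤ B₀ * Real.sqrt (∑ j, x j ^ 2) := by
  have h1 := Finset.sum_mul_sq_le_sq_mul_sq univ (fun j => v j * mask (β j)) x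
  have h2 : ∑ j, (v j * mask (β j)) ^ 2 ≤ ∑ j, v j ^ 2 := by
    refine Finset.sum_le_sum fun j _ => ?_
    have := mask_sq_le (β j)
    nlinarith [sq_nonneg (v j)]
  have hnn : (0:ℝ) ≤ ∑ j, v j ^ 2 := Finset.sum_nonneg fun j _ => sq_nonneg _
  have hvsq : ∑ j, v j ^ 2 ≤ B₀ ^ 2 := by
    have := Real.sq_sqrt hnn
    nlinarith [Real.sqrt_nonneg (∑ j, v j ^ 2)]
  have hxnn : (0:ℝ) ≤ ∑ j, x j ^ 2 := Finset.sum_nonneg fun j _ => sq_nonneg _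
  calc |∑ j, (v j * mask (β j)) * x j|
      = Real.sqrt ((∑ j, (v j * mask (β j)) * x j) ^ 2) := (Real.sqrt_sq_eq_abs _).symm
    _ ≤ Real.sqrt (B₀ ^ 2 * ∑ j, x j ^ 2) := Real.sqrt_le_sqrt (by nlinarith)
    _ = B₀ * Real.sqrt (∑ j, x j ^ 2) := by
        rw [Real.sqrt_mul (sq_nonneg B₀), Real.sqrt_sq hB₀]

lemma sigma_abs {L : ℝ} {σ : ℝ → ℝ} (hσ : ∀ a b : ℝ, |σ a - σ b| ≤ L * |a - b|)
    (hσ0 : σ 0 = 0) (y : ℝ) : |σ y| ≤ L * |y| := by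
  have := hσ y 0; simpa [hσ0] using this

lemma Tval_abs_le {B₀ L : ℝ} {xs : Fin n → Fin d → ℝ} {σ : ℝ → ℝ}
    (hB₀ : 0 ≤ B₀) (hL : 0 ≤ L)
    (hσ : ∀ a b : ℝ, |σ a - σ b| ≤ L * |a - b|) (hσ0 : σ 0 = 0)
    {ε α : Fin n → Bool} {β : Fin n → Fin d → Bool} {v : Fin d → ℝ}
    (hv : Real.sqrt (∑ j, v j ^ 2) ≤ B₀) :
    |Tval xs σ ε α β v| ≤ CC B₀ L xs := by
  refine le_trans (Finset.abs_sum_le_sum_abs _ _) (Finset.sum_le_sum fun i _ => ?_)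
  have hsgn : |sgn (ε i)| = 1 := by unfold sgn; split <;> norm_num
  have hmask : |mask (α i)| ≤ 1 := by unfold mask; split <;> norm_num
  have hσa := sigma_abs hσ hσ0 (∑ j, (v j * mask (β i j)) * xs i j)
  have hcs := cs_bound hB₀ hv (fun j => β i j) (xs i)
  have h0 : (0:ℝ) ≤ |σ (∑ j, (v j * mask (β i j)) * xs i j)| := abs_nonneg _
  calc |sgn (ε i) * (mask (α i) * σ (∑ j, (v j * mask (β i j)) * xs i j))|
      = |sgn (ε i)| * (|mask (α i)| * |σ (∑ j, (v j * mask (β i j)) * xs i j)|) := by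
        rw [abs_mul, abs_mul]
    _ ≤ 1 * (1 * |σ (∑ j, (v j * mask (β i j)) * xs i j)|) := by
        rw [hsgn]
        exact mul_le_mul_of_nonneg_left
          (mul_le_mul_of_nonneg_right hmask h0) (by norm_num)
    _ = |σ (∑ j, (v j * mask (β i j)) * xs i j)| := by ring
    _ ≤ L * |∑ j, (v j * mask (β i j)) * xs i j| := hσa
    _ ≤ L * (B₀ * Real.sqrt (∑ j, xs i j ^ 2)) := mul_le_mul_of_nonneg_left hcs hL

lemma Gset_zero_mem {B₀ : ℝ} (hB₀ : 0 ≤ B₀) {xs : Fin n → Fin d → ℝ} {σ : ℝ → ℝ}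
    (hσ0 : σ 0 = 0) {ε α : Fin n → Bool} {β : Fin n → Fin d → Bool} :
    (0:ℝ) ∈ Gset B₀ xs σ ε α β :=
  ⟨0, by simpa using hB₀, Or.inl (Tval_zero hσ0).symm⟩

lemma Gset_bdd {B₀ L : ℝ} {xs : Fin n → Fin d → ℝ} {σ : ℝ → ℝ}
    (hB₀ : 0 ≤ B₀) (hL : 0 ≤ L)
    (hσ : ∀ a b : ℝ, |σ a - σ b| ≤ L * |a - b|) (hσ0 : σ 0 = 0)
    {ε α : Fin n → Bool} {β : Fin n → Fin d → Bool} :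
    ∀ u ∈ Gset B₀ xs σ ε α β, u ≤ CC B₀ L xs := by
  rintro u ⟨v, hv, h | h⟩ <;> rw [h]
  · exact le_trans (le_abs_self _) (Tval_abs_le hB₀ hL hσ hσ0 hv)
  · exact le_trans (neg_le_abs _) (Tval_abs_le hB₀ hL hσ hσ0 hv)

lemma Gv_nonneg {B₀ L : ℝ} {xs : Fin n → Fin d → ℝ} {σ : ℝ → ℝ}
    (hB₀ : 0 ≤ B₀) (hL : 0 ≤ L)
    (hσ : ∀ a b : ℝ, |σ a - σ b| ≤ L * |a - b|) (hσ0 : σ 0 = 0)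
    {ε α : Fin n → Bool} {β : Fin n → Fin d → Bool} :
    0 ≤ Gv B₀ xs σ ε α β :=
  le_csSup ⟨CC B₀ L xs, fun u hu => Gset_bdd hB₀ hL hσ hσ0 u hu⟩ (Gset_zero_mem hB₀ hσ0)

lemma mul_Tval_le_Gv {B₀ L : ℝ} {xs : Fin n → Fin d → ℝ} {σ : ℝ → ℝ}
    (hB₀ : 0 ≤ B₀) (hL : 0 ≤ L)
    (hσ : ∀ a b : ℝ, |σ a - σ b| ≤ L * |a - b|) (hσ0 : σ 0 = 0)
    {ε α : Fin n → Bool} {β : Fin n → Fin d → Bool} {v : Fin d → ℝ}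
    (hv : Real.sqrt (∑ j, v j ^ 2) ≤ B₀) (c : ℝ) :
    c * Tval xs σ ε α β v ≤ |c| * Gv B₀ xs σ ε α β := by
  have hbdd : BddAbove (Gset B₀ xs σ ε α β) :=
    ⟨CC B₀ L xs, fun u hu => Gset_bdd hB₀ hL hσ hσ0 u hu⟩
  have h1 : Tval xs σ ε α β v ≤ Gv B₀ xs σ ε α β :=
    le_csSup hbdd ⟨v, hv, Or.inl rfl⟩
  have h2 : -Tval xs σ ε α β v ≤ Gv B₀ xs σ ε α β :=
    le_csSup hbdd ⟨v, hv, Or.inr rfl⟩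
  have habs : |Tval xs σ ε α β v| ≤ Gv B₀ xs σ ε α β := abs_le.2 ⟨by linarith, h1⟩
  calc c * Tval xs σ ε α β v ≤ |c * Tval xs σ ε α β v| := le_abs_self _
    _ = |c| * |Tval xs σ ε α β v| := abs_mul _ _
    _ ≤ |c| * Gv B₀ xs σ ε α β := mul_le_mul_of_nonneg_left habs (abs_nonneg c)

end Net
section Net2

variable {m d n : ℕ}

def SValSet (B₁ B₀ : ℝ) (xs : Fin n → Fin d → ℝ) (σ : ℝ → ℝ) (ε : Fin n → Bool)
    (A : Fin m → Fin n → Bool) (B : Fin m → Fin n → Fin d → Bool) : Set ℝ :=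
  {v | ∃ w ∈ oneW m d B₁ B₀,
    v = (1 / (n:ℝ)) * ∑ k, w.1 k * Tval xs σ ε (A k) (B k) (w.2 k)}

lemma SValSet_zero_mem {B₁ B₀ : ℝ} (hB₁ : 0 ≤ B₁) (hB₀ : 0 ≤ B₀)
    {xs : Fin n → Fin d → ℝ} {σ : ℝ → ℝ} {ε : Fin n → Bool}
    {A : Fin m → Fin n → Bool} {B : Fin m → Fin n → Fin d → Bool} :
    (0:ℝ) ∈ SValSet B₁ B₀ xs σ ε A B := by
  refine ⟨⟨0, 0⟩, ⟨by simpa using hB₁, fun i => by simpa using hB₀⟩, ?_⟩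
  simp

lemma SValSet_le {B₁ B₀ L : ℝ} (hB₁ : 0 ≤ B₁) (hB₀ : 0 ≤ B₀) (hL : 0 ≤ L)
    {xs : Fin n → Fin d → ℝ} {σ : ℝ → ℝ}
    (hσ : ∀ a b : ℝ, |σ a - σ b| ≤ L * |a - b|) (hσ0 : σ 0 = 0)
    {ε : Fin n → Bool} {A : Fin m → Fin n → Bool} {B : Fin m → Fin n → Fin d → Bool}
    (hm : (univ : Finset (Fin m)).Nonempty) :
    ∀ u ∈ SValSet B₁ B₀ xs σ ε A B,
      u ≤ (B₁ / n) * univ.sup' hm (fun k => Gv B₀ xs σ ε (A k) (B k)) := by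
  rintro u ⟨w, ⟨hw1, hw2⟩, rfl⟩
  obtain ⟨k₀, hk₀⟩ := id hm
  have hGv0 : ∀ k, 0 ≤ Gv B₀ xs σ ε (A k) (B k) := fun k => Gv_nonneg hB₀ hL hσ hσ0
  have hM0 : 0 ≤ univ.sup' hm (fun k => Gv B₀ xs σ ε (A k) (B k)) :=
    le_trans (hGv0 k₀) (Finset.le_sup' (fun k => Gv B₀ xs σ ε (A k) (B k)) hk₀)
  have h1 : ∑ k, w.1 k * Tval xs σ ε (A k) (B k) (w.2 k)
      ≤ ∑ k, |w.1 k| * univ.sup' hm (fun k => Gv B₀ xs σ ε (A k) (B k)) := by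
    refine Finset.sum_le_sum fun k _ => ?_
    refine le_trans (mul_Tval_le_Gv hB₀ hL hσ hσ0 (hw2 k) (w.1 k)) ?_
    exact mul_le_mul_of_nonneg_left (Finset.le_sup' (fun k => Gv B₀ xs σ ε (A k) (B k)) (mem_univ k)) (abs_nonneg _)
  have h2 : ∑ k, |w.1 k| * univ.sup' hm (fun k => Gv B₀ xs σ ε (A k) (B k))
      ≤ B₁ * univ.sup' hm (fun k => Gv B₀ xs σ ε (A k) (B k)) := by
    rw [← Finset.sum_mul]
    exact mul_le_mul_of_nonneg_right hw1 hM0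
  have hn0 : (0:ℝ) ≤ 1 / (n:ℝ) := by positivity
  calc (1 / (n:ℝ)) * ∑ k, w.1 k * Tval xs σ ε (A k) (B k) (w.2 k)
      ≤ (1 / (n:ℝ)) * (B₁ * univ.sup' hm (fun k => Gv B₀ xs σ ε (A k) (B k))) :=
        mul_le_mul_of_nonneg_left (le_trans h1 h2) hn0
    _ = (B₁ / n) * univ.sup' hm (fun k => Gv B₀ xs σ ε (A k) (B k)) := by ring

lemma sSup_SValSet_le {B₁ B₀ L : ℝ} (hB₁ : 0 ≤ B₁) (hB₀ : 0 ≤ B₀) (hL : 0 ≤ L)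
    {xs : Fin n → Fin d → ℝ} {σ : ℝ → ℝ}
    (hσ : ∀ a b : ℝ, |σ a - σ b| ≤ L * |a - b|) (hσ0 : σ 0 = 0)
    {ε : Fin n → Bool} {A : Fin m → Fin n → Bool} {B : Fin m → Fin n → Fin d → Bool}
    (hm : (univ : Finset (Fin m)).Nonempty) :
    sSup (SValSet B₁ B₀ xs σ ε A B)
      ≤ (B₁ / n) * univ.sup' hm (fun k => Gv B₀ xs σ ε (A k) (B k)) :=
  csSup_le ⟨0, SValSet_zero_mem hB₁ hB₀⟩ (SValSet_le hB₁ hB₀ hL hσ hσ0 hm)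

lemma SValSet_bddAbove {B₁ B₀ L : ℝ} (hB₁ : 0 ≤ B₁) (hB₀ : 0 ≤ B₀) (hL : 0 ≤ L)
    {xs : Fin n → Fin d → ℝ} {σ : ℝ → ℝ}
    (hσ : ∀ a b : ℝ, |σ a - σ b| ≤ L * |a - b|) (hσ0 : σ 0 = 0)
    {ε : Fin n → Bool} {A : Fin m → Fin n → Bool} {B : Fin m → Fin n → Fin d → Bool}
    (hm : (univ : Finset (Fin m)).Nonempty) :
    BddAbove (SValSet B₁ B₀ xs σ ε A B) :=
  ⟨_, SValSet_le hB₁ hB₀ hL hσ hσ0 hm⟩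

lemma le_sSup_SValSet {B₁ B₀ L : ℝ} (hn : 0 < n)
    (hB₁ : 0 ≤ B₁) (hB₀ : 0 ≤ B₀) (hL : 0 ≤ L)
    {xs : Fin n → Fin d → ℝ} {σ : ℝ → ℝ}
    (hσ : ∀ a b : ℝ, |σ a - σ b| ≤ L * |a - b|) (hσ0 : σ 0 = 0)
    {ε : Fin n → Bool} {A : Fin m → Fin n → Bool} {B : Fin m → Fin n → Fin d → Bool}
    (hm : (univ : Finset (Fin m)).Nonempty) :
    (B₁ / n) * univ.sup' hm (fun k => Gv B₀ xs σ ε (A k) (B k))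
      ≤ sSup (SValSet B₁ B₀ xs σ ε A B) := by
  have hbdd := SValSet_bddAbove hB₁ hB₀ hL hσ hσ0 (xs := xs) (σ := σ) (ε := ε)
    (A := A) (B := B) hm
  have hnR : (0:ℝ) < (n:ℝ) := by exact_mod_cast hn
  obtain ⟨k₀, _, hk₀⟩ := Finset.exists_mem_eq_sup' hm
    (fun k => Gv B₀ xs σ ε (A k) (B k))
  rw [hk₀]
  -- key membership: for every u in the k₀-th G-set, (1/n)*(B₁*u) ∈ SValSet
  have key : ∀ u ∈ Gset B₀ xs σ ε (A k₀) (B k₀),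
      (1 / (n:ℝ)) * (B₁ * u) ∈ SValSet B₁ B₀ xs σ ε A B := by
    rintro u ⟨v, hv, hu | hu⟩
    · refine ⟨⟨fun k => if k = k₀ then B₁ else 0, fun k => if k = k₀ then v else 0⟩,
        ⟨?_, ?_⟩, ?_⟩
      · rw [Finset.sum_eq_single k₀ (fun k _ hk => by simp [hk]) (by simp)]
        simp [abs_of_nonneg hB₁]
      · intro k; by_cases hk : k = k₀ <;> simp [hk, hv, hB₀]
      · rw [Finset.sum_eq_single k₀ (fun k _ hk => by simp [hk]) (by simp)]
        simp [hu]
    · refine ⟨⟨fun k => if k = k₀ then -B₁ else 0, fun k => if k = k₀ then v else 0⟩,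
        ⟨?_, ?_⟩, ?_⟩
      · rw [Finset.sum_eq_single k₀ (fun k _ hk => by simp [hk]) (by simp)]
        simp [abs_of_nonneg hB₁]
      · intro k; by_cases hk : k = k₀ <;> simp [hk, hv, hB₀]
      · rw [Finset.sum_eq_single k₀ (fun k _ hk => by simp [hk]) (by simp)]
        simp only [hu]
        norm_num
  rcases eq_or_lt_of_le hB₁ with hB1z | hB1p
  · subst hB1z
    simpa using le_csSup hbdd (SValSet_zero_mem hB₁ hB₀)
  · have hpos : (0:ℝ) < B₁ / n := div_pos hB1p hnR
    have hG : Gv B₀ xs σ ε (A k₀) (B k₀) ≤ sSup (SValSet B₁ B₀ xs σ ε A B) / (B₁ / n) := by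
      refine csSup_le ⟨0, Gset_zero_mem hB₀ hσ0⟩ fun u hu => ?_
      rw [le_div_iff₀ hpos]
      calc u * (B₁ / n) = (1 / (n:ℝ)) * (B₁ * u) := by ring
        _ ≤ sSup (SValSet B₁ B₀ xs σ ε A B) := le_csSup hbdd (key u hu)
    calc (B₁ / n) * Gv B₀ xs σ ε (A k₀) (B k₀)
        ≤ (B₁ / n) * (sSup (SValSet B₁ B₀ xs σ ε A B) / (B₁ / n)) :=
          mul_le_mul_of_nonneg_left hG (le_of_lt hpos)
      _ = sSup (SValSet B₁ B₀ xs σ ε A B) := mul_div_cancel₀ _ (ne_of_gt hpos)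

end Net2
section Net3

variable {m d n : ℕ}

lemma sum_decompI {B₁ B₀ : ℝ} {xs : Fin n → Fin d → ℝ} {σ : ℝ → ℝ} {ε : Fin n → Bool}
    (rs : Fin n → (Fin m → Bool) × (Fin d → Bool))
    (w : (Fin m → ℝ) × (Fin m → Fin d → ℝ)) :
    ∑ i, sgn (ε i) * oneFI m d σ w (xs i) (rs i)
      = ∑ k, w.1 k * Tval xs σ ε (fun i => (rs i).1 k) (fun i => (rs i).2) (w.2 k) := by
  simp only [oneFI, Tval, Finset.mul_sum]
  rw [Finset.sum_comm]
  refine Finset.sum_congr rfl fun k _ => ?_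
  refine Finset.sum_congr rfl fun i _ => ?_
  have harg : (∑ j, w.2 k j * (xs i j * mask ((rs i).2 j)))
      = ∑ j, (w.2 k j * mask ((rs i).2 j)) * xs i j :=
    Finset.sum_congr rfl fun j _ => by ring
  rw [harg]; ring

lemma sum_decompII {B₁ B₀ : ℝ} {xs : Fin n → Fin d → ℝ} {σ : ℝ → ℝ} {ε : Fin n → Bool}
    (rs : Fin n → (Fin m → Bool) × (Fin m → Fin d → Bool))
    (w : (Fin m → ℝ) × (Fin m → Fin d → ℝ)) :
    ∑ i, sgn (ε i) * oneFII m d σ w (xs i) (rs i)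
      = ∑ k, w.1 k * Tval xs σ ε (fun i => (rs i).1 k) (fun i => (rs i).2 k) (w.2 k) := by
  simp only [oneFII, Tval, Finset.mul_sum]
  rw [Finset.sum_comm]
  refine Finset.sum_congr rfl fun k _ => ?_
  refine Finset.sum_congr rfl fun i _ => ?_
  ring

lemma setI_eq {B₁ B₀ : ℝ} {xs : Fin n → Fin d → ℝ} {σ : ℝ → ℝ} {ε : Fin n → Bool}
    (rs : Fin n → (Fin m → Bool) × (Fin d → Bool)) :
    {v : ℝ | ∃ w ∈ oneW m d B₁ B₀,
        v = (1 / (n:ℝ)) * ∑ i, sgn (ε i) * oneFI m d σ w (xs i) (rs i)}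
      = SValSet B₁ B₀ xs σ ε (fun k i => (rs i).1 k) (fun _ i => (rs i).2) := by
  ext u
  constructor
  · rintro ⟨w, hw, rfl⟩
    exact ⟨w, hw, by rw [sum_decompI (B₁ := B₁) (B₀ := B₀) rs w]⟩
  · rintro ⟨w, hw, rfl⟩
    exact ⟨w, hw, by rw [sum_decompI (B₁ := B₁) (B₀ := B₀) rs w]⟩

lemma setII_eq {B₁ B₀ : ℝ} {xs : Fin n → Fin d → ℝ} {σ : ℝ → ℝ} {ε : Fin n → Bool}
    (rs : Fin n → (Fin m → Bool) × (Fin m → Fin d → Bool)) :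
    {v : ℝ | ∃ w ∈ oneW m d B₁ B₀,
        v = (1 / (n:ℝ)) * ∑ i, sgn (ε i) * oneFII m d σ w (xs i) (rs i)}
      = SValSet B₁ B₀ xs σ ε (fun k i => (rs i).1 k) (fun k i => (rs i).2 k) := by
  ext u
  constructor
  · rintro ⟨w, hw, rfl⟩
    exact ⟨w, hw, by rw [sum_decompII (B₁ := B₁) (B₀ := B₀) rs w]⟩
  · rintro ⟨w, hw, rfl⟩
    exact ⟨w, hw, by rw [sum_decompII (B₁ := B₁) (B₀ := B₀) rs w]⟩

lemma empRadI_le {B₁ B₀ L : ℝ} (hB₁ : 0 ≤ B₁) (hB₀ : 0 ≤ B₀) (hL : 0 ≤ L)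
    {xs : Fin n → Fin d → ℝ} {σ : ℝ → ℝ}
    (hσ : ∀ a b : ℝ, |σ a - σ b| ≤ L * |a - b|) (hσ0 : σ 0 = 0)
    (hm : (univ : Finset (Fin m)).Nonempty)
    (rs : Fin n → (Fin m → Bool) × (Fin d → Bool)) :
    empRadW n (oneW m d B₁ B₀) (oneFI m d σ) xs rs
      ≤ (∑ ε : Fin n → Bool, (B₁ / n) * univ.sup' hm
          (fun k => Gv B₀ xs σ ε (fun i => (rs i).1 k) (fun i => (rs i).2))) / 2 ^ n := by
  unfold empRadW
  gcongr with ε hε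
  rw [setI_eq rs]
  exact sSup_SValSet_le hB₁ hB₀ hL hσ hσ0 hm

lemma empRadII_ge {B₁ B₀ L : ℝ} (hn : 0 < n) (hB₁ : 0 ≤ B₁) (hB₀ : 0 ≤ B₀) (hL : 0 ≤ L)
    {xs : Fin n → Fin d → ℝ} {σ : ℝ → ℝ}
    (hσ : ∀ a b : ℝ, |σ a - σ b| ≤ L * |a - b|) (hσ0 : σ 0 = 0)
    (hm : (univ : Finset (Fin m)).Nonempty)
    (rs : Fin n → (Fin m → Bool) × (Fin m → Fin d → Bool)) :
    (∑ ε : Fin n → Bool, (B₁ / n) * univ.sup' hm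
        (fun k => Gv B₀ xs σ ε (fun i => (rs i).1 k) (fun i => (rs i).2 k))) / 2 ^ n
      ≤ empRadW n (oneW m d B₁ B₀) (oneFII m d σ) xs rs := by
  unfold empRadW
  gcongr with ε hε
  rw [setII_eq rs]
  exact le_sSup_SValSet hn hB₁ hB₀ hL hσ hσ0 hm

def eqvI (m d n : ℕ) : (Fin n → (Fin m → Bool) × (Fin d → Bool))
    ≃ ((Fin m → Fin n → Bool) × (Fin n → Fin d → Bool)) where
  toFun rs := (fun k i => (rs i).1 k, fun i => (rs i).2)
  invFun x := fun i => (fun k => x.1 k i, x.2 i)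
  left_inv rs := rfl
  right_inv x := rfl

def eqvII (m d n : ℕ) : (Fin n → (Fin m → Bool) × (Fin m → Fin d → Bool))
    ≃ ((Fin m → Fin n → Bool) × (Fin m → Fin n → Fin d → Bool)) where
  toFun rs := (fun k i => (rs i).1 k, fun k i => (rs i).2 k)
  invFun x := fun i => (fun k => x.1 k i, fun k => x.2 k i)
  left_inv rs := rfl
  right_inv x := rfl

lemma wtI_factor {ρ : ℝ} (aa : Fin m → Fin n → Bool) (c : Fin n → Fin d → Bool) :
    ∏ i, wtOneI m d ρ (fun k => aa k i, c i)
      = (∏ k, ∏ i, bw ρ (aa k i)) * ∏ i, ∏ j, bw ρ (c i j) := by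
  unfold wtOneI
  rw [Finset.prod_mul_distrib]
  congr 1
  exact Finset.prod_comm

lemma wtII_factor {ρ : ℝ} (aa : Fin m → Fin n → Bool) (bb : Fin m → Fin n → Fin d → Bool) :
    ∏ i, wtOneII m d ρ (fun k => aa k i, fun k => bb k i)
      = (∏ k, ∏ i, bw ρ (aa k i)) * ∏ k, ∏ i, ∏ j, bw ρ (bb k i j) := by
  unfold wtOneII
  rw [Finset.prod_mul_distrib]
  congr 1
  · exact Finset.prod_comm
  · exact Finset.prod_comm

lemma bw_nonneg {ρ : ℝ} (hρ0 : 0 ≤ ρ) (hρ1 : ρ ≤ 1) (b : Bool) : 0 ≤ bw ρ b := by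
  unfold bw; split <;> linarith

lemma bw_sum {ρ : ℝ} : ∑ b : Bool, bw ρ b = 1 := by
  rw [Fintype.sum_bool]; simp [bw]

end Net3
section Net4
variable {m d n : ℕ}
set_option maxHeartbeats 1000000 in
lemma middle {ρ B₁ B₀ : ℝ} (hρ0 : 0 ≤ ρ) (hρ1 : ρ ≤ 1) (hB₁ : 0 ≤ B₁)
    {xs : Fin n → Fin d → ℝ} {σ : ℝ → ℝ}
    (hm : (univ : Finset (Fin m)).Nonempty) (ε : Fin n → Bool) :
    ∑ rs : Fin n → (Fin m → Bool) × (Fin d → Bool),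
        (∏ i, wtOneI m d ρ (rs i)) * ((B₁ / n) * univ.sup' hm
          (fun k => Gv B₀ xs σ ε (fun i => (rs i).1 k) (fun i => (rs i).2)))
      ≤ ∑ rs : Fin n → (Fin m → Bool) × (Fin m → Fin d → Bool),
        (∏ i, wtOneII m d ρ (rs i)) * ((B₁ / n) * univ.sup' hm
          (fun k => Gv B₀ xs σ ε (fun i => (rs i).1 k) (fun i => (rs i).2 k))) := by
  have hLHS : ∑ rs : Fin n → (Fin m → Bool) × (Fin d → Bool),
      (∏ i, wtOneI m d ρ (rs i)) * ((B₁ / n) * univ.sup' hm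
        (fun k => Gv B₀ xs σ ε (fun i => (rs i).1 k) (fun i => (rs i).2)))
      = (B₁ / n) * ∑ aa : Fin m → Fin n → Bool, ∑ c : Fin n → Fin d → Bool,
          ((∏ k, ∏ i, bw ρ (aa k i)) * ∏ i, ∏ j, bw ρ (c i j)) *
            univ.sup' hm (fun k => Gv B₀ xs σ ε (aa k) c) := by
    rw [Fintype.sum_equiv (eqvI m d n)
      (fun rs => (∏ i, wtOneI m d ρ (rs i)) * ((B₁ / n) * univ.sup' hm
        (fun k => Gv B₀ xs σ ε (fun i => (rs i).1 k) (fun i => (rs i).2))))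
      (fun x => (∏ i, wtOneI m d ρ (fun k => x.1 k i, x.2 i)) * ((B₁ / n) * univ.sup' hm
        (fun k => Gv B₀ xs σ ε (x.1 k) x.2)))
      (fun rs => rfl)]
    rw [sum_prod_split (fun (aa : Fin m → Fin n → Bool) (c : Fin n → Fin d → Bool) =>
      (∏ i, wtOneI m d ρ (fun k => aa k i, c i)) * ((B₁ / n) * univ.sup' hm
        (fun k => Gv B₀ xs σ ε (aa k) c)))]
    rw [Finset.mul_sum]
    refine Finset.sum_congr rfl fun aa _ => ?_
    rw [Finset.mul_sum]
    refine Finset.sum_congr rfl fun c _ => ?_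
    rw [wtI_factor]
    ring
  have hRHS : ∑ rs : Fin n → (Fin m → Bool) × (Fin m → Fin d → Bool),
      (∏ i, wtOneII m d ρ (rs i)) * ((B₁ / n) * univ.sup' hm
        (fun k => Gv B₀ xs σ ε (fun i => (rs i).1 k) (fun i => (rs i).2 k)))
      = (B₁ / n) * ∑ aa : Fin m → Fin n → Bool, ∑ bb : Fin m → Fin n → Fin d → Bool,
          ((∏ k, ∏ i, bw ρ (aa k i)) * ∏ k, ∏ i, ∏ j, bw ρ (bb k i j)) *
            univ.sup' hm (fun k => Gv B₀ xs σ ε (aa k) (bb k)) := by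
    rw [Fintype.sum_equiv (eqvII m d n)
      (fun rs => (∏ i, wtOneII m d ρ (rs i)) * ((B₁ / n) * univ.sup' hm
        (fun k => Gv B₀ xs σ ε (fun i => (rs i).1 k) (fun i => (rs i).2 k))))
      (fun x => (∏ i, wtOneII m d ρ (fun k => x.1 k i, fun k => x.2 k i)) *
        ((B₁ / n) * univ.sup' hm (fun k => Gv B₀ xs σ ε (x.1 k) (x.2 k))))
      (fun rs => rfl)]
    rw [sum_prod_split (fun (aa : Fin m → Fin n → Bool) (bb : Fin m → Fin n → Fin d → Bool) =>
      (∏ i, wtOneII m d ρ (fun k => aa k i, fun k => bb k i)) * ((B₁ / n) * univ.sup' hm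
        (fun k => Gv B₀ xs σ ε (aa k) (bb k))))]
    rw [Finset.mul_sum]
    refine Finset.sum_congr rfl fun aa _ => ?_
    rw [Finset.mul_sum]
    refine Finset.sum_congr rfl fun bb _ => ?_
    rw [wtII_factor]
    ring
  rw [hLHS, hRHS]
  have hp1 : ∑ α : Fin n → Bool, ∏ i, bw ρ (α i) = 1 := by
    rw [sum_pi_prod (bw ρ), bw_sum, one_pow]
  have hq1 : ∑ β : Fin n → Fin d → Bool, ∏ i, ∏ j, bw ρ (β i j) = 1 := by
    rw [sum_pi_prod (fun g : Fin d → Bool => ∏ j, bw ρ (g j)), sum_pi_prod (bw ρ),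
      bw_sum, one_pow, one_pow]
  have hBn : (0:ℝ) ≤ B₁ / n := by positivity
  refine mul_le_mul_of_nonneg_left ?_ hBn
  exact core (A := Fin n → Bool) (C := Fin n → Fin d → Bool) hm
    (fun α => ∏ i, bw ρ (α i)) (fun β => ∏ i, ∏ j, bw ρ (β i j))
    (fun α => Finset.prod_nonneg fun i _ => bw_nonneg hρ0 hρ1 _)
    (fun β => Finset.prod_nonneg fun i _ => Finset.prod_nonneg fun j _ => bw_nonneg hρ0 hρ1 _)
    hp1 hq1 (fun α β => Gv B₀ xs σ ε α β)
end Net4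
section Net5

variable {m d n : ℕ}

lemma empRadW_eq_zero {Wt X R : Type*} (WS : Set Wt) (F : Wt → X → R → ℝ)
    (xs : Fin n → X) (rs : Fin n → R) (hWS : WS.Nonempty)
    (hF : ∀ w ∈ WS, ∀ x r, F w x r = 0) : empRadW n WS F xs rs = 0 := by
  unfold empRadW
  have h : ∀ ε : Fin n → Bool,
      {v : ℝ | ∃ w ∈ WS, v = (1 / (n:ℝ)) * ∑ i, sgn (ε i) * F w (xs i) (rs i)}
        = {(0:ℝ)} := by
    intro ε; ext v
    simp only [Set.mem_setOf_eq, Set.mem_singleton_iff]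
    constructor
    · rintro ⟨w, hw, rfl⟩
      simp [hF w hw]
    · rintro rfl
      obtain ⟨w₀, hw₀⟩ := hWS
      exact ⟨w₀, hw₀, by simp [hF w₀ hw₀]⟩
  have h2 : ∀ ε : Fin n → Bool,
      sSup {v : ℝ | ∃ w ∈ WS, v = (1 / (n:ℝ)) * ∑ i, sgn (ε i) * F w (xs i) (rs i)}
        = 0 := fun ε => by rw [h ε]; exact csSup_singleton 0
  rw [Finset.sum_congr rfl fun ε _ => h2 ε]
  simp

lemma exchange {R : Type*} [Fintype R] (W : R → ℝ) (u : (Fin n → Bool) → R → ℝ) :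
    ∑ rs : R, W rs * ((∑ ε : Fin n → Bool, u ε rs) / 2 ^ n)
      = (∑ ε : Fin n → Bool, ∑ rs : R, W rs * u ε rs) / 2 ^ n := by
  calc ∑ rs : R, W rs * ((∑ ε : Fin n → Bool, u ε rs) / 2 ^ n)
      = ∑ rs : R, (∑ ε : Fin n → Bool, W rs * u ε rs) / 2 ^ n := by
        refine Finset.sum_congr rfl fun rs _ => ?_
        rw [← mul_div_assoc, Finset.mul_sum]
    _ = (∑ rs : R, ∑ ε : Fin n → Bool, W rs * u ε rs) / 2 ^ n := by
        rw [Finset.sum_div]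
    _ = (∑ ε : Fin n → Bool, ∑ rs : R, W rs * u ε rs) / 2 ^ n := by
        rw [Finset.sum_comm]

lemma pointwise {ρ B₁ B₀ L : ℝ} (hn : 0 < n) (hρ0 : 0 ≤ ρ) (hρ1 : ρ ≤ 1)
    (hB₁ : 0 ≤ B₁) (hB₀ : 0 ≤ B₀) (hL : 0 ≤ L)
    {σ : ℝ → ℝ} (hσ : ∀ a b : ℝ, |σ a - σ b| ≤ L * |a - b|) (hσ0 : σ 0 = 0)
    (xs : Fin n → Fin d → ℝ) :
    ∑ rs : Fin n → (Fin m → Bool) × (Fin d → Bool),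
        (∏ i, wtOneI m d ρ (rs i)) * empRadW n (oneW m d B₁ B₀) (oneFI m d σ) xs rs
      ≤ ∑ rs : Fin n → (Fin m → Bool) × (Fin m → Fin d → Bool),
        (∏ i, wtOneII m d ρ (rs i)) * empRadW n (oneW m d B₁ B₀) (oneFII m d σ) xs rs := by
  rcases Nat.eq_zero_or_pos m with hm0 | hmpos
  · subst hm0
    have hWne : (oneW 0 d B₁ B₀).Nonempty :=
      ⟨⟨0, 0⟩, by simpa using hB₁, fun i => i.elim0⟩
    have h1 : ∀ rs : Fin n → (Fin 0 → Bool) × (Fin d → Bool),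
        empRadW n (oneW 0 d B₁ B₀) (oneFI 0 d σ) xs rs = 0 :=
      fun rs => empRadW_eq_zero _ _ _ _ hWne (fun w _ x r => by simp [oneFI])
    have h2 : ∀ rs : Fin n → (Fin 0 → Bool) × (Fin 0 → Fin d → Bool),
        empRadW n (oneW 0 d B₁ B₀) (oneFII 0 d σ) xs rs = 0 :=
      fun rs => empRadW_eq_zero _ _ _ _ hWne (fun w _ x r => by simp [oneFII])
    simp [h1, h2]
  · have hm : (univ : Finset (Fin m)).Nonempty := ⟨⟨0, hmpos⟩, mem_univ _⟩
    have hWI0 : ∀ rs : Fin n → (Fin m → Bool) × (Fin d → Bool),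
        0 ≤ ∏ i, wtOneI m d ρ (rs i) :=
      fun rs => Finset.prod_nonneg fun i _ => mul_nonneg
        (Finset.prod_nonneg fun k _ => bw_nonneg hρ0 hρ1 _)
        (Finset.prod_nonneg fun j _ => bw_nonneg hρ0 hρ1 _)
    have hWII0 : ∀ rs : Fin n → (Fin m → Bool) × (Fin m → Fin d → Bool),
        0 ≤ ∏ i, wtOneII m d ρ (rs i) :=
      fun rs => Finset.prod_nonneg fun i _ => mul_nonneg
        (Finset.prod_nonneg fun k _ => bw_nonneg hρ0 hρ1 _)
        (Finset.prod_nonneg fun k _ => Finset.prod_nonneg fun j _ => bw_nonneg hρ0 hρ1 _)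
    calc ∑ rs : Fin n → (Fin m → Bool) × (Fin d → Bool),
          (∏ i, wtOneI m d ρ (rs i)) * empRadW n (oneW m d B₁ B₀) (oneFI m d σ) xs rs
        ≤ ∑ rs : Fin n → (Fin m → Bool) × (Fin d → Bool),
          (∏ i, wtOneI m d ρ (rs i)) * ((∑ ε : Fin n → Bool, (B₁ / n) * univ.sup' hm
            (fun k => Gv B₀ xs σ ε (fun i => (rs i).1 k) (fun i => (rs i).2))) / 2 ^ n) :=
          Finset.sum_le_sum fun rs _ => mul_le_mul_of_nonneg_left
            (empRadI_le hB₁ hB₀ hL hσ hσ0 hm rs) (hWI0 rs)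
      _ = (∑ ε : Fin n → Bool, ∑ rs : Fin n → (Fin m → Bool) × (Fin d → Bool),
            (∏ i, wtOneI m d ρ (rs i)) * ((B₁ / n) * univ.sup' hm
              (fun k => Gv B₀ xs σ ε (fun i => (rs i).1 k) (fun i => (rs i).2)))) / 2 ^ n :=
          exchange _ _
      _ ≤ (∑ ε : Fin n → Bool, ∑ rs : Fin n → (Fin m → Bool) × (Fin m → Fin d → Bool),
            (∏ i, wtOneII m d ρ (rs i)) * ((B₁ / n) * univ.sup' hm
              (fun k => Gv B₀ xs σ ε (fun i => (rs i).1 k) (fun i => (rs i).2 k)))) / 2 ^ n := by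
          gcongr with ε hε
          exact middle hρ0 hρ1 hB₁ hm ε
      _ = ∑ rs : Fin n → (Fin m → Bool) × (Fin m → Fin d → Bool),
            (∏ i, wtOneII m d ρ (rs i)) * ((∑ ε : Fin n → Bool, (B₁ / n) * univ.sup' hm
              (fun k => Gv B₀ xs σ ε (fun i => (rs i).1 k) (fun i => (rs i).2 k))) / 2 ^ n) :=
          (exchange _ _).symm
      _ ≤ ∑ rs : Fin n → (Fin m → Bool) × (Fin m → Fin d → Bool),
            (∏ i, wtOneII m d ρ (rs i)) * empRadW n (oneW m d B₁ B₀) (oneFII m d σ) xs rs :=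
          Finset.sum_le_sum fun rs _ => mul_le_mul_of_nonneg_left
            (empRadII_ge hn hB₁ hB₀ hL hσ hσ0 hm rs) (hWII0 rs)

end Net5


/-- For the one-hidden-layer network, the dropout Rademacher
complexity of dropout of units is at most that of dropout of weights:
`𝔑ₙ(F_W^{(I)}) ≤ 𝔑ₙ(F_W^{(II)})`. -/
theorem one_hidden_rad_units_le_weights (m d n : ℕ) (hn : 0 < n)
    (ρ B₁ B₀ Bhat L : ℝ) (hρ0 : 0 ≤ ρ) (hρ1 : ρ ≤ 1)
    (hB₁ : 0 ≤ B₁) (hB₀ : 0 ≤ B₀) (hBhat : 0 ≤ Bhat) (hL : 0 ≤ L)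
    (σ : ℝ → ℝ) (hσ : ∀ a b : ℝ, |σ a - σ b| ≤ L * |a - b|) (hσ0 : σ 0 = 0)
    (DX : Measure (Fin d → ℝ)) [IsProbabilityMeasure DX]
    (hsupp : ∀ᵐ x ∂DX, Real.sqrt (∑ j, x j ^ 2) ≤ Bhat)
    (hint₁ : Integrable
      (fun xs : Fin n → Fin d → ℝ =>
        ∑ rs : Fin n → (Fin m → Bool) × (Fin d → Bool),
          (∏ i, wtOneI m d ρ (rs i)) * empRadW n (oneW m d B₁ B₀) (oneFI m d σ) xs rs)
      (Measure.pi fun _ => DX))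
    (hint₂ : Integrable
      (fun xs : Fin n → Fin d → ℝ =>
        ∑ rs : Fin n → (Fin m → Bool) × (Fin m → Fin d → Bool),
          (∏ i, wtOneII m d ρ (rs i)) * empRadW n (oneW m d B₁ B₀) (oneFII m d σ) xs rs)
      (Measure.pi fun _ => DX)) :
    radC n d DX (oneW m d B₁ B₀) (wtOneI m d ρ) (oneFI m d σ)
      ≤ radC n d DX (oneW m d B₁ B₀) (wtOneII m d ρ) (oneFII m d σ) := by
  unfold radC
  exact MeasureTheory.integral_mono hint₁ hint₂
    (fun xs => pointwise hn hρ0 hρ1 hB₁ hB₀ hL hσ hσ0 xs)
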